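/- arXiv:2110.12413 — 3 statements merged into one kernel-verified Lean document; each statement's English description precedes it below -/
import Mathlib

section
/- Let k ≥ 4 and 0 < |t| < 1 be real. Define the real symmetric tridiagonal k×k matrix M with diagonal entries m_j = (2k-2j+1)(2j) + t²(2j-1)(2k-2j+2) for 1 ≤ j ≤ k and off-diagonal entries s_j = t·√((2j+1)(2j)(2k-2j+1)(2k-2j)) for 1 ≤ j ≤ k-1. Then every eigenvalue of M is at least 1. -/
/-- Weighted AM–GM bound for `t * √A` when `A = U * V` with `U, V ≥ 0`. -/
lemma w_matrix_sqrt_bound (t U V A : ℝ) (ht : 0 ≤ t) (hU : 0 ≤ U) (hV : 0 ≤ V)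
    (hA : A = U * V) : t * Real.sqrt A ≤ (U + t ^ 2 * V) / 2 := by
  have h1 : t * Real.sqrt A = Real.sqrt (t ^ 2 * A) := by
    rw [Real.sqrt_mul (sq_nonneg t), Real.sqrt_sq ht]
  have hB : (0 : ℝ) ≤ (U + t ^ 2 * V) / 2 := by positivity
  rw [h1]
  have h2 : t ^ 2 * A ≤ ((U + t ^ 2 * V) / 2) ^ 2 := by
    rw [hA]; nlinarith [sq_nonneg (U - t ^ 2 * V)]
  calc Real.sqrt (t ^ 2 * A) ≤ Real.sqrt (((U + t ^ 2 * V) / 2) ^ 2) :=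
        Real.sqrt_le_sqrt h2
    _ = (U + t ^ 2 * V) / 2 := Real.sqrt_sq hB

/-- Sum of an indicator over `Fin k` is at most the indicated value. -/
lemma w_matrix_sum_if_le {k : ℕ} (c : ℕ) (b : ℝ) (hb : 0 ≤ b) :
    (∑ j : Fin k, if (j : ℕ) = c then b else 0) ≤ b := by
  by_cases h : c < k
  · rw [Finset.sum_eq_single (⟨c, h⟩ : Fin k)]
    · simp
    · intro j _ hj
      rw [if_neg]
      intro hc
      exact hj (Fin.ext hc)
    · intro h'; exact absurd (Finset.mem_univ _) h'
  · rw [Finset.sum_eq_zero]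
    · exact hb
    · intro j _
      rw [if_neg]
      intro hc
      exact h (hc ▸ j.isLt)

/-- Every eigenvalue of the real symmetric tridiagonal matrix `M` (arising from
the Kohn Laplacian on the `W` subspaces, with `k ≥ 4` and `0 < t < 1`) is at
least `1`. Rows/columns are indexed by `i : Fin k`, corresponding to the
1-based index `j = i + 1`. -/
theorem w_matrix_eigenvalues_ge_one (k : ℕ) (hk : 4 ≤ k) (t : ℝ)
    (ht0 : 0 < t) (ht1 : t < 1)
    (M : Matrix (Fin k) (Fin k) ℝ)
    (hM : ∀ i i' : Fin k,
      M i i' =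
        if (i : ℕ) = (i' : ℕ) then
          (2 * (k : ℝ) - 2 * ((i : ℕ) + 1) + 1) * (2 * ((i : ℕ) + 1)) +
            t ^ 2 * (2 * ((i : ℕ) + 1 : ℝ) - 1) * (2 * (k : ℝ) - 2 * ((i : ℕ) + 1) + 2)
        else if (i' : ℕ) = (i : ℕ) + 1 then
          t * Real.sqrt ((2 * ((i : ℕ) + 1 : ℝ) + 1) * (2 * ((i : ℕ) + 1)) *
            (2 * (k : ℝ) - 2 * ((i : ℕ) + 1) + 1) * (2 * (k : ℝ) - 2 * ((i : ℕ) + 1)))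
        else if (i : ℕ) = (i' : ℕ) + 1 then
          t * Real.sqrt ((2 * ((i' : ℕ) + 1 : ℝ) + 1) * (2 * ((i' : ℕ) + 1)) *
            (2 * (k : ℝ) - 2 * ((i' : ℕ) + 1) + 1) * (2 * (k : ℝ) - 2 * ((i' : ℕ) + 1)))
        else 0)
    (μ : ℝ) (hμ : ∃ v : Fin k → ℝ, v ≠ 0 ∧ M.mulVec v = μ • v) :
    1 ≤ μ := by
  obtain ⟨v, hv, hMv⟩ := hμ
  have heig : Module.End.HasEigenvalue (Matrix.toLin' M) μ :=
    Module.End.hasEigenvalue_of_hasEigenvector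
      ⟨Module.End.mem_eigenspace_iff.mpr (by rw [Matrix.toLin'_apply, hMv]), hv⟩
  obtain ⟨i, hball⟩ := eigenvalue_mem_ball heig
  rw [Metric.mem_closedBall, Real.dist_eq] at hball
  -- notation
  have hik : ((i : ℕ) : ℝ) + 1 ≤ (k : ℝ) := by exact_mod_cast i.isLt
  have hnr0 : (0 : ℝ) ≤ ((i : ℕ) : ℝ) := Nat.cast_nonneg _
  set nr : ℝ := ((i : ℕ) : ℝ) with hnrdef
  set K : ℝ := (k : ℝ) with hKdef
  set bR : ℝ := ((2 * nr + 2) * (2 * K - 2 * nr - 2)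
      + t ^ 2 * ((2 * nr + 3) * (2 * K - 2 * nr - 1))) / 2 with hbRdef
  set bL : ℝ := ((2 * nr) * (2 * K - 2 * nr)
      + t ^ 2 * ((2 * nr + 1) * (2 * K - 2 * nr + 1))) / 2 with hbLdef
  have hbRnn : 0 ≤ bR := by
    rw [hbRdef]
    have h1 : (0 : ℝ) ≤ (2 * nr + 2) * (2 * K - 2 * nr - 2) :=
      mul_nonneg (by linarith) (by linarith)
    have h2 : (0 : ℝ) ≤ t ^ 2 * ((2 * nr + 3) * (2 * K - 2 * nr - 1)) :=
      mul_nonneg (sq_nonneg t) (mul_nonneg (by linarith) (by linarith))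
    linarith
  have hbLnn : 0 ≤ bL := by
    rw [hbLdef]
    have h1 : (0 : ℝ) ≤ (2 * nr) * (2 * K - 2 * nr) :=
      mul_nonneg (by linarith) (by linarith)
    have h2 : (0 : ℝ) ≤ t ^ 2 * ((2 * nr + 1) * (2 * K - 2 * nr + 1)) :=
      mul_nonneg (sq_nonneg t) (mul_nonneg (by linarith) (by linarith))
    linarith
  -- pointwise bound on the off-diagonal entries of row i
  have key : ∀ j ∈ Finset.univ.erase i,
      ‖M i j‖ ≤ (if (j : ℕ) = (i : ℕ) + 1 then bR else 0)
        + (if (i : ℕ) = (j : ℕ) + 1 then bL else 0) := by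
    intro j hj
    have hji : (j : ℕ) ≠ (i : ℕ) := fun h => (Finset.mem_erase.mp hj).1 (Fin.ext h)
    have hif2 : (0 : ℝ) ≤ if (i : ℕ) = (j : ℕ) + 1 then bL else 0 := by
      split_ifs; exacts [hbLnn, le_rfl]
    have hif1 : (0 : ℝ) ≤ if (j : ℕ) = (i : ℕ) + 1 then bR else 0 := by
      split_ifs; exacts [hbRnn, le_rfl]
    rw [hM i j, if_neg (fun h => hji h.symm)]
    by_cases h1 : (j : ℕ) = (i : ℕ) + 1
    · rw [if_pos h1, if_pos h1, Real.norm_eq_abs,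
        abs_of_nonneg (mul_nonneg ht0.le (Real.sqrt_nonneg _))]
      have hb : t * Real.sqrt ((2 * ((i : ℕ) + 1 : ℝ) + 1) * (2 * ((i : ℕ) + 1)) *
          (2 * (k : ℝ) - 2 * ((i : ℕ) + 1) + 1) * (2 * (k : ℝ) - 2 * ((i : ℕ) + 1))) ≤ bR := by
        rw [hbRdef]
        apply w_matrix_sqrt_bound t ((2 * nr + 2) * (2 * K - 2 * nr - 2))
          ((2 * nr + 3) * (2 * K - 2 * nr - 1)) _ ht0.le
          (mul_nonneg (by linarith) (by linarith))
          (mul_nonneg (by linarith) (by linarith))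
        push_cast
        ring
      linarith
    · rw [if_neg h1, if_neg h1]
      by_cases h2 : (i : ℕ) = (j : ℕ) + 1
      · rw [if_pos h2, if_pos h2, Real.norm_eq_abs,
          abs_of_nonneg (mul_nonneg ht0.le (Real.sqrt_nonneg _))]
        have hjr : ((j : ℕ) : ℝ) + 1 = nr := by
          rw [hnrdef, h2]; push_cast; ring
        have hb : t * Real.sqrt ((2 * ((j : ℕ) + 1 : ℝ) + 1) * (2 * ((j : ℕ) + 1)) *
            (2 * (k : ℝ) - 2 * ((j : ℕ) + 1) + 1) * (2 * (k : ℝ) - 2 * ((j : ℕ) + 1))) ≤ bL := by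
          rw [hbLdef]
          apply w_matrix_sqrt_bound t ((2 * nr) * (2 * K - 2 * nr))
            ((2 * nr + 1) * (2 * K - 2 * nr + 1)) _ ht0.le
            (mul_nonneg (by linarith) (by linarith))
            (mul_nonneg (by linarith) (by linarith))
          push_cast
          rw [← hjr]
          push_cast
          ring
        linarith
      · rw [if_neg h2, if_neg h2]
        simp
  -- sum bound for the Gershgorin radius
  have hsum : (∑ j ∈ Finset.univ.erase i, ‖M i j‖) ≤ bR + bL := by
    calc (∑ j ∈ Finset.univ.erase i, ‖M i j‖)
        ≤ ∑ j ∈ Finset.univ.erase i,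
            ((if (j : ℕ) = (i : ℕ) + 1 then bR else 0)
              + (if (i : ℕ) = (j : ℕ) + 1 then bL else 0)) := Finset.sum_le_sum key
      _ ≤ ∑ j : Fin k,
            ((if (j : ℕ) = (i : ℕ) + 1 then bR else 0)
              + (if (i : ℕ) = (j : ℕ) + 1 then bL else 0)) := by
          apply Finset.sum_le_sum_of_subset_of_nonneg (Finset.erase_subset _ _)
          intro j _ _
          have hif2 : (0 : ℝ) ≤ if (i : ℕ) = (j : ℕ) + 1 then bL else 0 := by
            split_ifs; exacts [hbLnn, le_rfl]
          have hif1 : (0 : ℝ) ≤ if (j : ℕ) = (i : ℕ) + 1 then bR else 0 := by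
            split_ifs; exacts [hbRnn, le_rfl]
          linarith
      _ = (∑ j : Fin k, if (j : ℕ) = (i : ℕ) + 1 then bR else 0)
            + (∑ j : Fin k, if (i : ℕ) = (j : ℕ) + 1 then bL else 0) :=
          Finset.sum_add_distrib
      _ ≤ bR + bL := by
          apply add_le_add
          · exact w_matrix_sum_if_le ((i : ℕ) + 1) bR hbRnn
          · have hle : (∑ j : Fin k, if (i : ℕ) = (j : ℕ) + 1 then bL else 0)
                ≤ ∑ j : Fin k, if (j : ℕ) = (i : ℕ) - 1 then bL else 0 := by
              apply Finset.sum_le_sum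
              intro j _
              split_ifs with h1 h2
              · exact le_rfl
              · exact absurd (by omega : (j : ℕ) = (i : ℕ) - 1) h2
              · exact hbLnn
              · exact le_rfl
            exact le_trans hle (w_matrix_sum_if_le ((i : ℕ) - 1) bL hbLnn)
  -- diagonal entry
  have hdiag : M i i = (2 * K - 2 * nr - 1) * (2 * nr + 2)
      + t ^ 2 * ((2 * nr + 1) * (2 * K - 2 * nr)) := by
    rw [hM i i, if_pos rfl, hKdef, hnrdef]
    push_cast
    ring
  -- conclude via the Gershgorin bound and the row inequality
  have hrow : 1 + (bR + bL) ≤ M i i := by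
    rw [hdiag, hbRdef, hbLdef]
    have hprod : (0 : ℝ) ≤ (1 - t ^ 2) * (2 * K - 2 * nr - 1) :=
      mul_nonneg (by nlinarith) (by linarith)
    nlinarith [hprod]
  have habs : μ - M i i ≥ -(bR + bL) := by
    have := abs_le.mp (le_trans hball hsum)
    linarith [this.1]
  linarith
end

section
/- Let k ≥ 4 and 0 < t < 1. For 1 ≤ j ≤ k let m_j = (2k-2j+1)(2j) + t²(2j-1)(2k-2j+2) and s_j = t√((2j+1)(2j)(2k-2j+1)(2k-2j)), with s_0 = s_k = 0. Then for every 1 ≤ j ≤ k, m_j - s_{j-1} - s_j ≥ 1. -/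
lemma amgm_sqrt (t X Y : ℝ) (ht : 0 ≤ t) (hX : 0 ≤ X) (hY : 0 ≤ Y) :
    t * Real.sqrt (X * Y) ≤ (t ^ 2 * X + Y) / 2 := by
  have h1 : t * Real.sqrt (X * Y) = Real.sqrt ((t ^ 2 * X) * Y) := by
    rw [show (t ^ 2 * X) * Y = t ^ 2 * (X * Y) by ring,
      Real.sqrt_mul (sq_nonneg t), Real.sqrt_sq ht]
  rw [h1]
  have h2 : (t ^ 2 * X) * Y ≤ ((t ^ 2 * X + Y) / 2) ^ 2 := by
    nlinarith [sq_nonneg (t ^ 2 * X - Y)]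
  calc Real.sqrt ((t ^ 2 * X) * Y) ≤ Real.sqrt (((t ^ 2 * X + Y) / 2) ^ 2) :=
        Real.sqrt_le_sqrt h2
    _ = (t ^ 2 * X + Y) / 2 := Real.sqrt_sq (by positivity)

/-- For `k ≥ 4` and `0 < t < 1`, the Gershgorin lower bound `m_j - s_{j-1} - s_j`
is at least `1` for every `1 ≤ j ≤ k`. The formula for `s` automatically
vanishes at `j = 0` and `j = k`. -/
theorem gershgorin_row_bounds (k : ℕ) (hk : 4 ≤ k) (t : ℝ)
    (ht0 : 0 < t) (ht1 : t < 1) :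
    ∀ j : ℕ, 1 ≤ j → j ≤ k →
      ((2 * (k : ℝ) - 2 * j + 1) * (2 * j) +
          t ^ 2 * (2 * (j : ℝ) - 1) * (2 * (k : ℝ) - 2 * j + 2))
        - t * Real.sqrt ((2 * (j : ℝ) - 1) * (2 * (j : ℝ) - 2) *
            (2 * (k : ℝ) - 2 * j + 3) * (2 * (k : ℝ) - 2 * j + 2))
        - t * Real.sqrt ((2 * (j : ℝ) + 1) * (2 * j) *
            (2 * (k : ℝ) - 2 * j + 1) * (2 * (k : ℝ) - 2 * j)) ≥ 1 := by
  intro j hj1 hjk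
  have hj1' : (1 : ℝ) ≤ (j : ℝ) := by exact_mod_cast hj1
  have hjk' : (j : ℝ) ≤ (k : ℝ) := by exact_mod_cast hjk
  have h1 : t * Real.sqrt ((2 * (j : ℝ) - 1) * (2 * (j : ℝ) - 2) *
      (2 * (k : ℝ) - 2 * j + 3) * (2 * (k : ℝ) - 2 * j + 2)) ≤
      (t ^ 2 * ((2 * (j : ℝ) - 2) * (2 * (k : ℝ) - 2 * j + 3)) +
        (2 * (j : ℝ) - 1) * (2 * (k : ℝ) - 2 * j + 2)) / 2 := by
    have := amgm_sqrt t ((2 * (j : ℝ) - 2) * (2 * (k : ℝ) - 2 * j + 3))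
      ((2 * (j : ℝ) - 1) * (2 * (k : ℝ) - 2 * j + 2)) ht0.le
      (by nlinarith) (by nlinarith)
    rw [show ((2 * (j : ℝ) - 2) * (2 * (k : ℝ) - 2 * j + 3)) *
        ((2 * (j : ℝ) - 1) * (2 * (k : ℝ) - 2 * j + 2)) =
        (2 * (j : ℝ) - 1) * (2 * (j : ℝ) - 2) *
        (2 * (k : ℝ) - 2 * j + 3) * (2 * (k : ℝ) - 2 * j + 2) by ring] at this
    exact this
  have h2 : t * Real.sqrt ((2 * (j : ℝ) + 1) * (2 * j) *
      (2 * (k : ℝ) - 2 * j + 1) * (2 * (k : ℝ) - 2 * j)) ≤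
      (t ^ 2 * ((2 * (j : ℝ)) * (2 * (k : ℝ) - 2 * j + 1)) +
        (2 * (j : ℝ) + 1) * (2 * (k : ℝ) - 2 * j)) / 2 := by
    have := amgm_sqrt t ((2 * (j : ℝ)) * (2 * (k : ℝ) - 2 * j + 1))
      ((2 * (j : ℝ) + 1) * (2 * (k : ℝ) - 2 * j)) ht0.le
      (by nlinarith) (by nlinarith)
    rw [show ((2 * (j : ℝ)) * (2 * (k : ℝ) - 2 * j + 1)) *
        ((2 * (j : ℝ) + 1) * (2 * (k : ℝ) - 2 * j)) =
        (2 * (j : ℝ) + 1) * (2 * j) *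
        (2 * (k : ℝ) - 2 * j + 1) * (2 * (k : ℝ) - 2 * j) by ring] at this
    exact this
  nlinarith [sq_nonneg t, h1, h2]
end

section
/- Let d ≥ 1 be odd and k ≥ 0 be even. Then the number of integers a with 0 ≤ a ≤ k such that d divides 2a - k equals 2⌊k/(2d)⌋ + 1. -/
/-- For `d` odd and positive and `k` even, the number of `a ∈ [0,k]` with
`d ∣ 2a - k` is `2⌊k/(2d)⌋ + 1`. -/
theorem count_odd_even (d k : ℕ) (hd : 1 ≤ d) (hdo : Odd d) (hke : Even k) :
    ((Finset.range (k + 1)).filter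
      (fun a : ℕ => (d : ℤ) ∣ 2 * (a : ℤ) - (k : ℤ))).card = 2 * (k / (2 * d)) + 1 := by
  obtain ⟨m, rfl⟩ := hke
  have hd0 : 0 < d := hd
  have hdiv : (m + m) / (2 * d) = m / d := by
    rw [show m + m = 2 * m by ring, Nat.mul_div_mul_left _ _ (by norm_num)]
  rw [hdiv]
  have hmd : m = d * (m / d) + m % d := (Nat.div_add_mod m d).symm
  have hmdlt : m % d < d := Nat.mod_lt _ hd0
  have hset : (Finset.range (m + m + 1)).filter
      (fun a : ℕ => (d : ℤ) ∣ 2 * (a : ℤ) - ((m + m : ℕ) : ℤ)) =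
      (Finset.range (2 * (m / d) + 1)).image (fun t => m % d + t * d) := by
    ext a
    simp only [Finset.mem_filter, Finset.mem_range, Finset.mem_image]
    constructor
    · rintro ⟨ha, hdvd⟩
      have hc : IsCoprime (d : ℤ) 2 := by
        have : IsCoprime (d : ℤ) ((2 : ℕ) : ℤ) :=
          Nat.isCoprime_iff_coprime.mpr (Nat.coprime_two_right.mpr hdo)
        exact_mod_cast this
      have h1 : (d : ℤ) ∣ ((a : ℤ) - m) := by
        have : (d : ℤ) ∣ 2 * ((a : ℤ) - m) := by
          have : 2 * (a : ℤ) - ((m + m : ℕ) : ℤ) = 2 * ((a : ℤ) - m) := by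
            push_cast; ring
          rwa [this] at hdvd
        exact hc.dvd_of_dvd_mul_left this
      have hmod : m % d = a % d := (Nat.modEq_iff_dvd).mpr h1
      refine ⟨a / d, ?_, ?_⟩
      · have had : a = (a / d) * d + m % d := by
          rw [hmod]; rw [Nat.mul_comm]; exact (Nat.div_add_mod a d).symm
        generalize hq : m / d = q at *
        generalize hr : m % d = r at *
        generalize hs : a / d = s at *
        nlinarith [had, hmd, hmdlt, ha, hd0]
      · have had : a = (a / d) * d + m % d := by
          rw [hmod]; rw [Nat.mul_comm]; exact (Nat.div_add_mod a d).symm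
        omega
    · rintro ⟨t, ht, rfl⟩
      constructor
      · have hb : t * d ≤ 2 * (m / d) * d :=
          Nat.mul_le_mul_right d (show t ≤ 2 * (m / d) by omega)
        generalize hq : m / d = q at *
        generalize hr : m % d = r at *
        nlinarith [hmd, hmdlt, hb]
      · refine ⟨2 * ((t : ℤ) - (m / d : ℕ)), ?_⟩
        have hmz : (m : ℤ) = d * (m / d : ℕ) + (m % d : ℕ) := by exact_mod_cast hmd
        push_cast at hmz ⊢
        linear_combination (-2 : ℤ) * hmz
  rw [hset, Finset.card_image_of_injective _ ?_, Finset.card_range]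
  intro t1 t2 h
  simp only at h
  exact Nat.eq_of_mul_eq_mul_right hd0 (by omega)
end
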